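/- Let q be an odd prime power, let n be an odd integer with n ≤ q, set k = (n+1)/2, and let a_1, ..., a_n be distinct elements of F_q. If −L_a(a_i)^{−1} is a nonzero square in F_q for all 1 ≤ i ≤ n, then there exist nonzero v_1, ..., v_n ∈ F_q with v_i^2 = −L_a(a_i)^{−1} such that the extended code GRS_k(a, v, ∞) is an MDS Euclidean self-dual code of length n+1 (i.e., it has dimension (n+1)/2, minimum distance (n+1)/2 + 1, and equals its Euclidean dual in F_q^{n+1}). -/

import Mathlib

open Finset

variable {F : Type*} [Field F]

/-- The extended generalized Reed–Solomon code
`GRS_k(a, v, ∞) = { (v₁ f(a₁), …, vₙ f(aₙ), f_{k-1}) : f ∈ F[x], deg f ≤ k - 1 }`. -/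
noncomputable def eGRSCode (n k : ℕ) (a v : Fin n → F) : Submodule F (Fin (n + 1) → F) :=
  (Polynomial.degreeLT F k).map
    (LinearMap.pi (Fin.lastCases (Polynomial.lcoeff F (k - 1))
      (fun i => v i • Polynomial.leval (a i))))

/-- The Euclidean dual code `C^⊥ = { u : ∀ c ∈ C, ∑ i, u i * c i = 0 }`. -/
def dualCode {m : ℕ} (C : Submodule F (Fin m → F)) : Submodule F (Fin m → F) where
  carrier := { u | ∀ c ∈ C, ∑ i, u i * c i = 0 }
  add_mem' := by
    intro u w hu hw c hc
    simp only [Set.mem_setOf_eq] at hu hw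
    simp [Pi.add_apply, add_mul, Finset.sum_add_distrib, hu c hc, hw c hc]
  zero_mem' := by intro c hc; simp
  smul_mem' := by
    intro r u hu c hc
    simp only [Set.mem_setOf_eq] at hu
    simp [Pi.smul_apply, smul_eq_mul, mul_assoc, ← Finset.mul_sum, hu c hc]

/-- `C` has minimum Hamming distance `d`. -/
def IsMinDist [DecidableEq F] {m : ℕ} (C : Submodule F (Fin m → F)) (d : ℕ) : Prop :=
  (∀ c ∈ C, c ≠ 0 → d ≤ hammingNorm c) ∧ ∃ c ∈ C, c ≠ 0 ∧ hammingNorm c = d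

/-! ### Auxiliary lemmas -/

lemma lagrange_basis_coeff {n : ℕ} (a : Fin n → F) (ha : Function.Injective a) (i : Fin n) :
    (Lagrange.basis Finset.univ a i).coeff (n - 1) =
      (∏ j ∈ Finset.univ.erase i, (a i - a j))⁻¹ := by
  have hinj : Set.InjOn a (Finset.univ : Finset (Fin n)) := ha.injOn
  have hmem : i ∈ (Finset.univ : Finset (Fin n)) := mem_univ i
  have hnd : (Lagrange.basis Finset.univ a i).natDegree = n - 1 := by
    simpa using Lagrange.natDegree_basis hinj hmem
  rw [← hnd, ← Polynomial.leadingCoeff]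
  rw [Lagrange.basis, Polynomial.leadingCoeff_prod, ← Finset.prod_inv_distrib]
  refine Finset.prod_congr rfl fun j hj => ?_
  rw [Lagrange.basisDivisor, Polynomial.leadingCoeff_mul, Polynomial.leadingCoeff_C,
    (Polynomial.monic_X_sub_C (a j)).leadingCoeff, mul_one]

lemma coeff_eq_sum_lagrange {n : ℕ} (a : Fin n → F) (ha : Function.Injective a)
    (h : Polynomial F) (hdeg : h.degree < n) :
    h.coeff (n - 1) = ∑ i, h.eval (a i) * (∏ j ∈ Finset.univ.erase i, (a i - a j))⁻¹ := by
  have hinj : Set.InjOn a (Finset.univ : Finset (Fin n)) := ha.injOn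
  have heq := Lagrange.eq_interpolate hinj (f := h) (by simpa using hdeg)
  conv_lhs => rw [heq]
  rw [Lagrange.interpolate_apply, Polynomial.finset_sum_coeff]
  refine Finset.sum_congr rfl fun i _ => ?_
  rw [Polynomial.coeff_C_mul, lagrange_basis_coeff a ha]

lemma coeff_mul_two {k : ℕ} (f g : Polynomial F) (hf : f.degree < k) (hg : g.degree < k) :
    (f * g).coeff (2 * k - 2) = f.coeff (k - 1) * g.coeff (k - 1) := by
  rw [Polynomial.coeff_mul]
  have h2 : 2 * k - 2 = (k - 1) + (k - 1) := by omega
  rw [h2]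
  refine Finset.sum_eq_single ((k - 1, k - 1) : ℕ × ℕ) ?_ ?_
  · rintro ⟨i, j⟩ hij hne
    rw [Finset.HasAntidiagonal.mem_antidiagonal] at hij
    simp only at hij
    rcases lt_or_ge i k with hi | hi
    · have hj : k ≤ j := by
        rcases lt_or_ge j k with hj | hj
        · exfalso; apply hne; simp only [Prod.mk.injEq]; omega
        · exact hj
      have : g.coeff j = 0 := Polynomial.coeff_eq_zero_of_degree_lt
        (lt_of_lt_of_le hg (by exact_mod_cast Nat.cast_le.mpr hj))
      simp [this]
    · have : f.coeff i = 0 := Polynomial.coeff_eq_zero_of_degree_lt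
        (lt_of_lt_of_le hf (by exact_mod_cast Nat.cast_le.mpr hi))
      simp [this]
  · intro h
    exact absurd (Finset.HasAntidiagonal.mem_antidiagonal.mpr (by omega)) h

lemma card_eval_zero_le [DecidableEq F] {n : ℕ} (a : Fin n → F) (ha : Function.Injective a)
    (f : Polynomial F) (hf : f ≠ 0) :
    #{i : Fin n | f.eval (a i) = 0} ≤ f.natDegree := by
  calc #{i : Fin n | f.eval (a i) = 0} ≤ f.roots.toFinset.card := by
        apply Finset.card_le_card_of_injOn a
        · intro i hi
          rw [Finset.mem_coe, Finset.mem_filter] at hi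
          rw [Finset.mem_coe, Multiset.mem_toFinset, Polynomial.mem_roots hf]
          exact hi.2
        · exact ha.injOn
    _ ≤ Multiset.card f.roots := f.roots.toFinset_card_le
    _ ≤ f.natDegree := f.card_roots'

lemma mem_eGRSCode {n k : ℕ} {a v : Fin n → F} {u : Fin (n + 1) → F} :
    u ∈ eGRSCode n k a v ↔ ∃ f : Polynomial F, f.degree < k ∧
      (∀ i : Fin n, u i.castSucc = v i * f.eval (a i)) ∧ u (Fin.last n) = f.coeff (k - 1) := by
  constructor
  · rintro ⟨f, hf, rfl⟩
    rw [SetLike.mem_coe, Polynomial.mem_degreeLT] at hf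
    exact ⟨f, hf, fun i => by simp [LinearMap.pi_apply], by simp [LinearMap.pi_apply]⟩
  · rintro ⟨f, hf, h1, h2⟩
    refine ⟨f, Polynomial.mem_degreeLT.mpr hf, ?_⟩
    funext j
    induction j using Fin.lastCases with
    | last => simp [LinearMap.pi_apply, h2]
    | cast i => simp [LinearMap.pi_apply, h1 i]

lemma poly_eq_zero_of_eval {n k : ℕ} (hkn : k ≤ n) (a : Fin n → F) (ha : Function.Injective a)
    (f : Polynomial F) (hdeg : f.degree < k) (hev : ∀ i, f.eval (a i) = 0) : f = 0 := by
  classical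
  by_contra hf
  have hcard := card_eval_zero_le a ha f hf
  have hall : ({i : Fin n | f.eval (a i) = 0} : Finset (Fin n)) = Finset.univ := by
    ext i; simp [hev i]
  rw [hall, Finset.card_univ, Fintype.card_fin] at hcard
  have hnd : f.natDegree < k := (Polynomial.natDegree_lt_iff_degree_lt hf).mpr hdeg
  omega

lemma finrank_eGRSCode {n k : ℕ} (hkn : k ≤ n) (a v : Fin n → F)
    (ha : Function.Injective a) (hv : ∀ i, v i ≠ 0) :
    Module.finrank F (eGRSCode n k a v) = k := by
  classical
  set φ : Polynomial F →ₗ[F] (Fin (n + 1) → F) :=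
    LinearMap.pi (Fin.lastCases (Polynomial.lcoeff F (k - 1))
      (fun i => v i • Polynomial.leval (a i))) with hφ
  have hrange : eGRSCode n k a v
      = LinearMap.range (φ ∘ₗ (Polynomial.degreeLT F k).subtype) := by
    rw [LinearMap.range_comp, Submodule.range_subtype]; rfl
  have hinj : Function.Injective (φ ∘ₗ (Polynomial.degreeLT F k).subtype) := by
    rw [← LinearMap.ker_eq_bot, LinearMap.ker_eq_bot']
    rintro ⟨f, hf⟩ h0
    rw [Polynomial.mem_degreeLT] at hf
    have hev : ∀ i : Fin n, f.eval (a i) = 0 := by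
      intro i
      have := congrFun h0 i.castSucc
      simp only [LinearMap.comp_apply, Submodule.subtype_apply, hφ,
        LinearMap.pi_apply, Fin.lastCases_castSucc, LinearMap.smul_apply,
        Polynomial.leval_apply, smul_eq_mul, Pi.zero_apply] at this
      rcases mul_eq_zero.mp this with h | h
      · exact absurd h (hv i)
      · exact h
    exact Subtype.ext (poly_eq_zero_of_eval hkn a ha f hf hev)
  rw [hrange, LinearMap.finrank_range_of_inj hinj]
  rw [(Polynomial.degreeLTEquiv F k).finrank_eq, Module.finrank_pi]
  simp

noncomputable def dotForm (m : ℕ) : LinearMap.BilinForm F (Fin m → F) :=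
  LinearMap.mk₂ F (fun u w => ∑ i, u i * w i)
    (fun u u' w => by simp [add_mul, Finset.sum_add_distrib])
    (fun c u w => by simp [Finset.mul_sum, mul_assoc])
    (fun u w w' => by simp [mul_add, Finset.sum_add_distrib])
    (fun c u w => by simp [Finset.mul_sum]; ring_nf; simp [mul_comm, mul_left_comm])

lemma dotForm_apply {m : ℕ} (u w : Fin m → F) : dotForm m u w = ∑ i, u i * w i := rfl

lemma dotForm_refl (m : ℕ) : (dotForm (F := F) m).IsRefl := by
  intro u w h
  rw [dotForm_apply] at h ⊢
  rw [← h]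
  exact Finset.sum_congr rfl fun i _ => mul_comm _ _

lemma dotForm_nondeg (m : ℕ) : (dotForm (F := F) m).Nondegenerate := by
  refine ⟨fun u hu => ?_, fun u hu => ?_⟩ <;> funext i <;> have := hu (Pi.single i 1) <;>
  simpa [dotForm_apply, Pi.single_apply, mul_comm] using this

lemma dualCode_eq_orthogonal {m : ℕ} (C : Submodule F (Fin m → F)) :
    dualCode C = (dotForm m).orthogonal C := by
  ext u
  constructor
  · intro hu c hc
    have := hu c hc
    rw [dotForm_apply, ← this]
    exact Finset.sum_congr rfl fun i _ => mul_comm _ _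
  · intro hu c hc
    have := hu c hc
    rw [dotForm_apply] at this
    rw [← this]
    exact Finset.sum_congr rfl fun i _ => mul_comm _ _

lemma finrank_dualCode {m : ℕ} (C : Submodule F (Fin m → F)) :
    Module.finrank F (dualCode C) = m - Module.finrank F C := by
  rw [dualCode_eq_orthogonal,
    LinearMap.BilinForm.finrank_orthogonal (dotForm_nondeg m) C]
  simp

lemma hamming_split [DecidableEq F] {n k : ℕ} (a v : Fin n → F) (hv : ∀ i, v i ≠ 0)
    (f : Polynomial F) (c : Fin (n + 1) → F)
    (h1 : ∀ i : Fin n, c i.castSucc = v i * f.eval (a i))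
    (h2 : c (Fin.last n) = f.coeff (k - 1)) :
    hammingNorm c + (#{i : Fin n | f.eval (a i) = 0}
      + (if f.coeff (k - 1) = 0 then 1 else 0)) = n + 1 := by
  have hz : #{j : Fin (n + 1) | c j = 0}
      = #{i : Fin n | f.eval (a i) = 0} + (if f.coeff (k - 1) = 0 then 1 else 0) := by
    rw [Finset.card_filter, Fin.sum_univ_castSucc, Finset.card_filter]
    congr 1
    · refine Finset.sum_congr rfl fun i _ => ?_
      rw [h1 i]
      simp [mul_eq_zero, hv i]
    · rw [h2]
  have key : hammingNorm c + #{j : Fin (n + 1) | c j = 0} = n + 1 := by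
    unfold hammingNorm
    rw [add_comm]
    have := Finset.card_filter_add_card_filter_not
      (s := (Finset.univ : Finset (Fin (n + 1)))) (p := fun j => c j = 0)
    simpa using this
  omega

lemma card_val_lt {n m : ℕ} (hmn : m ≤ n) :
    #{j : Fin n | (j : ℕ) < m} = m := by
  have : ({j : Fin n | (j : ℕ) < m} : Finset (Fin n))
      = Finset.map (Fin.castLEEmb hmn) Finset.univ := by
    ext j
    simp only [Finset.mem_filter, Finset.mem_univ, true_and, Finset.mem_map,
      Fin.castLEEmb_apply]
    constructor
    · intro hj; exact ⟨⟨j, hj⟩, by simp⟩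
    · rintro ⟨i, rfl⟩; simpa using i.2
  rw [this, Finset.card_map, Finset.card_univ, Fintype.card_fin]

/-- [Yan, Lemma 2].  Let `F` be a finite field of odd cardinality `q`,
`n` an odd integer with `n ≤ q`, `k = (n+1)/2`, and `a 0, …, a (n-1)` distinct elements of
`F`.  If `-L_a(a i)⁻¹` is a nonzero square for all `i`, then there are nonzero `v i` with
`v i ^ 2 = -L_a(a i)⁻¹` such that the extended code `GRS_k(a, v, ∞)` is an MDS Euclidean
self-dual code of length `n + 1`: it has dimension `(n+1)/2`, minimum distance
`(n+1)/2 + 1`, and equals its Euclidean dual in `F^{n+1}`. -/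
theorem eGRSCode_MDS_selfDual (F : Type*) [Field F] [Fintype F] [DecidableEq F]
    (hq : Odd (Fintype.card F))
    {n : ℕ} (hn : Odd n) (hnq : n ≤ Fintype.card F)
    (a : Fin n → F) (ha : Function.Injective a)
    (hsq : ∀ i, ∃ b : F, b ≠ 0 ∧
      -(∏ j ∈ Finset.univ.erase i, (a i - a j))⁻¹ = b ^ 2) :
    ∃ v : Fin n → F, (∀ i, v i ≠ 0) ∧
      (∀ i, v i ^ 2 = -(∏ j ∈ Finset.univ.erase i, (a i - a j))⁻¹) ∧
      Module.finrank F (eGRSCode n ((n + 1) / 2) a v) = (n + 1) / 2 ∧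
      IsMinDist (eGRSCode n ((n + 1) / 2) a v) ((n + 1) / 2 + 1) ∧
      eGRSCode n ((n + 1) / 2) a v = dualCode (eGRSCode n ((n + 1) / 2) a v) := by
  obtain ⟨m, hm⟩ := hn
  set k : ℕ := m + 1 with hk
  have hk2 : (n + 1) / 2 = k := by omega
  have h2k : n + 1 = 2 * k := by omega
  have hkn : k ≤ n := by omega
  have hk1n : k - 1 ≤ n := by omega
  rw [hk2]
  choose v hv0 hvsq' using hsq
  have hvsq : ∀ i, v i ^ 2 = -(∏ j ∈ Finset.univ.erase i, (a i - a j))⁻¹ :=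
    fun i => (hvsq' i).symm
  refine ⟨v, hv0, hvsq, finrank_eGRSCode hkn a v ha hv0, ?_, ?_⟩
  · -- minimum distance
    constructor
    · -- lower bound
      intro c hc hc0
      obtain ⟨f, hdeg, h1, h2⟩ := mem_eGRSCode.mp hc
      have hf0 : f ≠ 0 := by
        rintro rfl
        apply hc0
        funext j
        induction j using Fin.lastCases with
        | last => simpa using h2
        | cast i => simpa using h1 i
      have hsplit := hamming_split (k := k) a v hv0 f c h1 h2
      have hnd : f.natDegree < k := (Polynomial.natDegree_lt_iff_degree_lt hf0).mpr hdeg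
      have hr := card_eval_zero_le a ha f hf0
      by_cases hck : f.coeff (k - 1) = 0
      · have hndlt : f.natDegree ≠ k - 1 := by
          intro hEq
          apply hf0
          have : f.leadingCoeff = 0 := by
            rw [Polynomial.leadingCoeff, hEq, hck]
          exact Polynomial.leadingCoeff_eq_zero.mp this
        simp only [hck, if_true] at hsplit
        omega
      · simp only [hck, if_false] at hsplit
        omega
    · -- a codeword of weight k + 1
      set f₀ : Polynomial F :=
        ∏ i : Fin (k - 1), (Polynomial.X - Polynomial.C (a (Fin.castLE hk1n i))) with hf₀
      have hmon : f₀.Monic :=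
        Polynomial.monic_prod_of_monic _ _ fun i _ => Polynomial.monic_X_sub_C _
      have hnd : f₀.natDegree = k - 1 := by
        rw [hf₀, Polynomial.natDegree_prod _ _
          (fun i _ => Polynomial.X_sub_C_ne_zero _)]
        simp
      have hdeg : f₀.degree < (k : WithBot ℕ) := by
        rw [Polynomial.degree_eq_natDegree hmon.ne_zero, hnd]
        exact_mod_cast (by omega : k - 1 < k)
      have hcoeff : f₀.coeff (k - 1) = 1 := by
        rw [← hnd]; exact hmon.coeff_natDegree
      set c₀ : Fin (n + 1) → F :=
        Fin.lastCases (f₀.coeff (k - 1)) (fun i => v i * f₀.eval (a i)) with hc₀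
      have h1 : ∀ i : Fin n, c₀ i.castSucc = v i * f₀.eval (a i) := fun i => by
        simp [hc₀]
      have h2 : c₀ (Fin.last n) = f₀.coeff (k - 1) := by simp [hc₀]
      have hmem : c₀ ∈ eGRSCode n k a v := mem_eGRSCode.mpr ⟨f₀, hdeg, h1, h2⟩
      have hc0 : c₀ ≠ 0 := by
        intro h
        have := congrFun h (Fin.last n)
        rw [h2, hcoeff] at this
        exact one_ne_zero this
      refine ⟨c₀, hmem, hc0, ?_⟩
      have hsplit := hamming_split (k := k) a v hv0 f₀ c₀ h1 h2
      have hev : ∀ j : Fin n, f₀.eval (a j) = 0 ↔ (j : ℕ) < k - 1 := by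
        intro j
        rw [hf₀, Polynomial.eval_prod, Finset.prod_eq_zero_iff]
        constructor
        · rintro ⟨i, -, hi⟩
          simp only [Polynomial.eval_sub, Polynomial.eval_X, Polynomial.eval_C,
            sub_eq_zero] at hi
          have : j = Fin.castLE hk1n i := ha hi
          rw [this]
          simpa using i.2
        · intro hj
          refine ⟨⟨(j : ℕ), hj⟩, Finset.mem_univ _, ?_⟩
          simp only [Polynomial.eval_sub, Polynomial.eval_X, Polynomial.eval_C,
            sub_eq_zero]
          rfl
      have hrcard : #{i : Fin n | f₀.eval (a i) = 0} = k - 1 := by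
        have hEq : ({i : Fin n | f₀.eval (a i) = 0} : Finset (Fin n))
            = ({j : Fin n | (j : ℕ) < k - 1} : Finset (Fin n)) := by
          ext j; simp [hev j]
        rw [hEq]
        exact card_val_lt hk1n
      rw [hrcard, hcoeff] at hsplit
      simp only [one_ne_zero, if_false] at hsplit
      omega
  · -- self-duality
    have hle : eGRSCode n k a v ≤ dualCode (eGRSCode n k a v) := by
      intro u hu c hc
      obtain ⟨f, hdf, hf1, hf2⟩ := mem_eGRSCode.mp hu
      obtain ⟨g, hdg, hg1, hg2⟩ := mem_eGRSCode.mp hc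
      have hdegfg : (f * g).degree < (n : WithBot ℕ) := by
        rcases eq_or_ne f 0 with rfl | hf0
        · simp only [zero_mul, Polynomial.degree_zero]
          exact WithBot.bot_lt_coe n
        rcases eq_or_ne g 0 with rfl | hg0
        · simp only [mul_zero, Polynomial.degree_zero]
          exact WithBot.bot_lt_coe n
        have hf' : f.natDegree < k := (Polynomial.natDegree_lt_iff_degree_lt hf0).mpr hdf
        have hg' : g.natDegree < k := (Polynomial.natDegree_lt_iff_degree_lt hg0).mpr hdg
        rw [Polynomial.degree_mul, Polynomial.degree_eq_natDegree hf0,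
          Polynomial.degree_eq_natDegree hg0]
        exact_mod_cast (by omega : f.natDegree + g.natDegree < n)
      have hcoeff : (f * g).coeff (n - 1) = f.coeff (k - 1) * g.coeff (k - 1) := by
        rw [show n - 1 = 2 * k - 2 by omega]
        exact coeff_mul_two f g hdf hdg
      have hlag := coeff_eq_sum_lagrange a ha (f * g) hdegfg
      rw [Fin.sum_univ_castSucc]
      have hterm : ∀ i : Fin n, u i.castSucc * c i.castSucc
          = -((f * g).eval (a i) * (∏ j ∈ Finset.univ.erase i, (a i - a j))⁻¹) := by
        intro i
        rw [hf1 i, hg1 i, Polynomial.eval_mul]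
        have : v i * f.eval (a i) * (v i * g.eval (a i))
            = v i ^ 2 * (f.eval (a i) * g.eval (a i)) := by ring
        rw [this, hvsq i]
        ring
      rw [Finset.sum_congr rfl fun i _ => hterm i, Finset.sum_neg_distrib, ← hlag,
        hcoeff, hf2, hg2]
      ring
    have hfr : Module.finrank F (dualCode (eGRSCode n k a v))
        ≤ Module.finrank F (eGRSCode n k a v) := by
      rw [finrank_dualCode, finrank_eGRSCode hkn a v ha hv0]
      omega
    exact Submodule.eq_of_le_of_finrank_le hle hfr
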